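/- Let m₁, m₂, n ≥ 1. Suppose C₁ is a noncrossing matching of the boundary points of an m₁×n rectangle with no arc having both endpoints on the bottom side and every bottom point matched across (the bottom is a 'no-return' side), and C₂ similarly has its top side with no returns. Then gluing C₁ atop C₂ along the n bottom/top points yields a noncrossing matching C of the boundary of the (m₁+m₂)×n rectangle, and every vertical separating line of C is crossed at most d^v(C₁) + d^v(C₂) ≤ m₁ + m₂ times, while every horizontal separating line lying within the C₁ (resp. C₂) part is crossed the same number of times as in C₁ (resp. C₂). -/

import Mathlib

/-- `f` is a noncrossing perfect matching of the `P` points `0, 1, ..., P-1`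
(in circular order): a fixed-point-free involution of the points whose chords
are pairwise noncrossing. -/
def IsNCMatching (P : ℕ) (f : ℕ → ℕ) : Prop :=
  (∀ p, p < P → f p < P) ∧ (∀ p, p < P → f (f p) = p) ∧ (∀ p, p < P → f p ≠ p) ∧
  (∀ p q, p < P → q < P → ¬ (p < q ∧ q < f p ∧ f p < f q))

/-- Number of arcs of the matching `f` crossing a separating line: the number of
arcs with exactly one endpoint in the side `S`. -/
def lineCross (P : ℕ) (S : ℕ → Prop) [DecidablePred S] (f : ℕ → ℕ) : ℕ :=
  ((Finset.range P).filter (fun p => S p ∧ ¬ S (f p))).card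

/-  Boundary points of an `m × n` rectangle, in circular order: `n` top points
`0..n-1` (left to right), `m` right points `n..n+m-1` (top to bottom), `n` bottom
points `n+m..2n+m-1` (right to left), `m` left points `2n+m..2n+2m-1` (bottom to
top). -/

/-- The left side of the `j`-th vertical separating line (`1 ≤ j ≤ n-1`) of the
`m × n` rectangle. -/
def vSide (m n j p : ℕ) : Prop := p < j ∨ 2 * n + m - j ≤ p

/-- The upper side of the `i`-th horizontal separating line (`1 ≤ i ≤ m-1`) of
the `m × n` rectangle. -/
def hSide (m n i p : ℕ) : Prop := p < n + i ∨ 2 * n + 2 * m - i ≤ p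

instance (m n j : ℕ) : DecidablePred (vSide m n j) := fun p => by
  unfold vSide; infer_instance

instance (m n i : ℕ) : DecidablePred (hSide m n i) := fun p => by
  unfold hSide; infer_instance

/-- `d^v(C)`: the maximum, over the `n-1` vertical separating lines of the
`m × n` rectangle, of the number of intersections of the matching with the line. -/
def dv (m n : ℕ) (f : ℕ → ℕ) : ℕ :=
  (Finset.Icc 1 (n - 1)).sup (fun j => lineCross (2 * (m + n)) (vSide m n j) f)

/-- Embedding of the non-bottom boundary points of the upper `m₁ × n` rectangle
into the boundary points of the glued `(m₁+m₂) × n` rectangle. -/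
def emb₁ (m₁ m₂ n p : ℕ) : ℕ := if p < n + m₁ then p else p + 2 * m₂

lemma nc_inj {P : ℕ} {f : ℕ → ℕ} (h : IsNCMatching P f) {p q : ℕ} (hp : p < P) (hq : q < P)
    (e : f p = f q) : p = q := by
  have h1 := h.2.1 p hp; have h2 := h.2.1 q hq; rw [e] at h1; omega

lemma nc_mem {P : ℕ} {f : ℕ → ℕ} (h : IsNCMatching P f) {a x : ℕ} (ha : a < P) (hx : x < P)
    (h1 : a < x) (h2 : x < f a) : a < f x ∧ f x < f a := by
  have hfa : f (f a) = a := h.2.1 a ha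
  have hfx : f (f x) = x := h.2.1 x hx
  have hfxP : f x < P := h.1 x hx
  have hne1 : f x ≠ a := by
    intro e; have e2 : f (f x) = f a := by rw [e]
    rw [hfx] at e2; omega
  have hne2 : f x ≠ f a := by intro e; have := nc_inj h hx ha e; omega
  have c1 : ¬ (f x < a ∧ a < f (f x) ∧ f (f x) < f a) := h.2.2.2 (f x) a hfxP ha
  have c2 : ¬ (a < x ∧ x < f a ∧ f a < f x) := h.2.2.2 a x ha hx
  rw [hfx] at c1
  omega

lemma nc_iff {P : ℕ} {f : ℕ → ℕ} (h : IsNCMatching P f) {a x : ℕ} (ha : a < P) (hx : x < P)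
    (h1 : x ≠ a) (h2 : x ≠ f a) : (a < x ∧ x < f a) ↔ (a < f x ∧ f x < f a) := by
  constructor
  · rintro ⟨u, v⟩; exact nc_mem h ha hx u v
  · rintro ⟨u, v⟩
    have hfxP : f x < P := h.1 x hx
    have := nc_mem h ha hfxP u v
    rwa [h.2.1 x hx] at this

lemma reverse_nc {P : ℕ} {f : ℕ → ℕ} (h : IsNCMatching P f) :
    IsNCMatching P (fun p => P - 1 - f (P - 1 - p)) := by
  obtain ⟨h1, h2, h3, h4⟩ := h
  have key : ∀ p, p < P → P - 1 - p < P := by intro p hp; omega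
  refine ⟨fun p hp => ?_, fun p hp => ?_, fun p hp => ?_, fun p q hp hq => ?_⟩
  · show P - 1 - f (P - 1 - p) < P
    have := h1 (P - 1 - p) (key p hp); omega
  · show P - 1 - f (P - 1 - (P - 1 - f (P - 1 - p))) = p
    have hA : f (P - 1 - p) < P := h1 _ (key p hp)
    have e : P - 1 - (P - 1 - f (P - 1 - p)) = f (P - 1 - p) := by omega
    rw [e, h2 _ (key p hp)]; omega
  · show P - 1 - f (P - 1 - p) ≠ p
    have hA : f (P - 1 - p) < P := h1 _ (key p hp)
    have := h3 (P - 1 - p) (key p hp)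
    omega
  · show ¬ (p < q ∧ q < P - 1 - f (P - 1 - p) ∧ P - 1 - f (P - 1 - p) < P - 1 - f (P - 1 - q))
    rintro ⟨a1, a2, a3⟩
    have hfq : f (P - 1 - q) < P := h1 _ (key q hq)
    have hfp : f (P - 1 - p) < P := h1 _ (key p hp)
    have c := h4 (f (P - 1 - q)) (f (P - 1 - p)) hfq hfp
    rw [h2 _ (key q hq), h2 _ (key p hp)] at c
    omega

lemma lemB (P a b g h μ : ℕ) (f : ℕ → ℕ) (hf : IsNCMatching P f)
    (hT : ∀ p, a ≤ p → p < b → ¬ (a ≤ f p ∧ f p < b))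
    (hag : a < g) (hgb : g < b) (hbh : b ≤ h) (hhP : h ≤ P)
    (hgh : g + h = 2 * b + μ) (hPa : P + 2 * a = 2 * b + 2 * μ) :
    ((Finset.range P).filter (fun p => ¬ (g ≤ p ∧ p < h) ∧ (g ≤ f p ∧ f p < h))).card ≤ μ := by
  classical
  set val : ℕ → ℕ := fun p => if f p < a then f p + P else f p with hval
  have dec : ∀ p p', a ≤ p → p < p' → p' < b → val p' < val p := by
    intro p p' h1 h2 h3
    have hpP : p < P := by omega
    have hp'P : p' < P := by omega
    have hfpP : f p < P := hf.1 p hpP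
    have hfp'P : f p' < P := hf.1 p' hp'P
    have hTp := hT p h1 (by omega)
    have hTp' := hT p' (by omega) h3
    have hne : f p ≠ f p' := fun e => by have := nc_inj hf hpP hp'P e; omega
    have c1 := hf.2.2.2 p p' hpP hp'P
    have c2 := hf.2.2.2 (f p) (f p') hfpP hfp'P
    rw [hf.2.1 p hpP, hf.2.1 p' hp'P] at c2
    have c3 := hf.2.2.2 (f p') p hfp'P hpP
    rw [hf.2.1 p' hp'P] at c3
    simp only [hval]
    split_ifs with u1 u2 u2 <;> omega
  have val_ge : ∀ k p, a ≤ p → p + k + 1 = b → 2 * b ≤ val p + p + 1 := by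
    intro k
    induction k with
    | zero =>
      intro p h1 h2
      have hTp := hT p h1 (by omega)
      simp only [hval]; split_ifs <;> omega
    | succ k ih =>
      intro p h1 h2
      have := ih (p + 1) (by omega) (by omega)
      have := dec p (p + 1) h1 (by omega) (by omega)
      omega
  set C := (Finset.range P).filter (fun p => ¬ (g ≤ p ∧ p < h) ∧ (g ≤ f p ∧ f p < h)) with hC
  have memC : ∀ p, p ∈ C ↔ (p < P ∧ ¬ (g ≤ p ∧ p < h) ∧ g ≤ f p ∧ f p < h) := by
    intro p; simp [hC]
  set X := C.filter (fun p => a ≤ p ∧ p < g) with hX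
  set Y := C.filter (fun p => ¬ (a ≤ p ∧ p < g)) with hY
  have hsplit : X.card + Y.card = C.card := Finset.card_filter_add_card_filter_not _
  have memY : ∀ q, q ∈ Y → q < P ∧ (q < a ∨ h ≤ q) ∧ g ≤ f q ∧ f q < h := by
    intro q hq
    rw [hY, Finset.mem_filter] at hq
    rw [memC] at hq
    constructor; · exact hq.1.1
    constructor; · omega
    exact hq.1.2.2
  by_cases hXe : X = ∅
  · -- X empty case
    have hXc : X.card = 0 := by rw [hXe]; simp
    set D := (Finset.range P).filter (fun q => q < a ∨ h ≤ q) with hD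
    have hDeq : D = Finset.range a ∪ Finset.Ico h P := by
      ext q; simp [hD, Finset.mem_range, Finset.mem_Ico]; omega
    have hDcard : D.card = a + (P - h) := by
      rw [hDeq, Finset.card_union_of_disjoint]
      · simp [Nat.card_Ico]
      · rw [Finset.disjoint_left]; intro q hq hq'
        simp at hq hq'; omega
    set W := (Finset.Ico a g).image f with hW
    have hWcard : W.card = g - a := by
      rw [hW, Finset.card_image_of_injOn, Nat.card_Ico]
      intro x hx y hy e
      simp [Finset.mem_Ico] at hx hy
      exact nc_inj hf (by omega) (by omega) e
    have hWD : W ⊆ D := by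
      intro w hw
      rw [hW, Finset.mem_image] at hw
      obtain ⟨p, hp, rfl⟩ := hw
      simp [Finset.mem_Ico] at hp
      have hpP : p < P := by omega
      have hfpP : f p < P := hf.1 p hpP
      have hTp := hT p hp.1 (by omega)
      have hnX : p ∉ X := by rw [hXe]; simp
      rw [hX, Finset.mem_filter, memC] at hnX
      simp [hD]
      constructor; · exact hfpP
      by_contra hcon
      push_neg at hcon
      exact hnX ⟨⟨hpP, by omega, by omega, by omega⟩, hp.1, hp.2⟩
    have hYD : Y ⊆ D := by
      intro q hq
      have := memY q hq
      simp [hD]; omega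
    have hdisj : Disjoint Y W := by
      rw [Finset.disjoint_left]
      intro q hq hq'
      have h1 := memY q hq
      rw [hW, Finset.mem_image] at hq'
      obtain ⟨p, hp, rfl⟩ := hq'
      simp [Finset.mem_Ico] at hp
      have hpP : p < P := by omega
      rw [hf.2.1 p hpP] at h1
      omega
    have := Finset.card_le_card (Finset.union_subset hYD hWD)
    rw [Finset.card_union_of_disjoint hdisj, hWcard, hDcard] at this
    omega
  · -- X nonempty
    have hXne : X.Nonempty := Finset.nonempty_iff_ne_empty.mpr hXe
    set p0 := X.min' hXne with hp0def
    have hp0 : p0 ∈ X := X.min'_mem hXne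
    have hmin : ∀ x ∈ X, p0 ≤ x := fun x hx => X.min'_le x hx
    have hp0' : p0 < P ∧ (a ≤ p0 ∧ p0 < g) ∧ g ≤ f p0 ∧ f p0 < h := by
      rw [hX, Finset.mem_filter, memC] at hp0
      exact ⟨hp0.1.1, hp0.2, hp0.1.2.2⟩
    have hTp0 := hT p0 hp0'.2.1.1 (by omega)
    have hfb : b ≤ f p0 := by omega
    have hvge := val_ge (b - 1 - p0) p0 hp0'.2.1.1 (by omega)
    have hvp0 : val p0 = f p0 := by simp only [hval]; split_ifs <;> omega
    rw [hvp0] at hvge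
    have hXcard : X.card ≤ g - p0 := by
      have : X ⊆ Finset.Ico p0 g := by
        intro x hx
        have := hmin x hx
        rw [hX, Finset.mem_filter] at hx
        simp [Finset.mem_Ico]; omega
      have := Finset.card_le_card this
      rwa [Nat.card_Ico] at this
    have hYcard : Y.card ≤ h - (f p0 + 1) := by
      have hmaps : ∀ q ∈ Y, f q ∈ Finset.Ico (f p0 + 1) h := by
        intro q hq
        obtain ⟨hqP, hqloc, hfq1, hfq2⟩ := memY q hq
        have hfqP : f q < P := hf.1 q hqP
        have hne : f q ≠ f p0 := by
          intro e
          have := nc_inj hf hqP hp0'.1 e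
          omega
        simp [Finset.mem_Ico]
        rcases hqloc with hlo | hhi
        · have c := hf.2.2.2 q p0 hqP hp0'.1
          omega
        · have c := hf.2.2.2 p0 (f q) hp0'.1 hfqP
          rw [hf.2.1 q hqP] at c
          omega
      have hinj : ∀ q ∈ Y, ∀ q' ∈ Y, f q = f q' → q = q' := by
        intro q hq q' hq' e
        exact nc_inj hf (memY q hq).1 (memY q' hq').1 e
      have := Finset.card_le_card_of_injOn f hmaps hinj
      rwa [Nat.card_Ico] at this
    omega

lemma cross_top_le (m n j : ℕ) (f : ℕ → ℕ) (hf : IsNCMatching (2 * (m + n)) f)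
    (htop : ∀ p, p < n → ¬ f p < n) (hj1 : 1 ≤ j) (hj2 : j + 1 ≤ n) :
    lineCross (2 * (m + n)) (vSide m n j) f ≤ m := by
  classical
  have hB := lemB (2 * (m + n)) 0 n j (2 * n + m - j) m f hf
    (fun p _ hp => by have := htop p hp; omega)
    (by omega) (by omega) (by omega) (by omega) (by omega) (by omega)
  unfold lineCross
  have e : (Finset.range (2 * (m + n))).filter (fun p => vSide m n j p ∧ ¬ vSide m n j (f p))
      = (Finset.range (2 * (m + n))).filter
        (fun p => ¬ (j ≤ p ∧ p < 2 * n + m - j) ∧ (j ≤ f p ∧ f p < 2 * n + m - j)) := by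
    apply Finset.filter_congr
    intro p hp
    simp only [vSide]
    constructor <;> intro hh <;> omega
  rw [e]
  exact hB

lemma cross_bot_le (m n j : ℕ) (f : ℕ → ℕ) (hf : IsNCMatching (2 * (m + n)) f)
    (hbot : ∀ p, n + m ≤ p → p < 2 * n + m → ¬ (n + m ≤ f p ∧ f p < 2 * n + m))
    (hj1 : 1 ≤ j) (hj2 : j + 1 ≤ n) :
    lineCross (2 * (m + n)) (vSide m n j) f ≤ m := by
  classical
  set P := 2 * (m + n) with hP
  set f' : ℕ → ℕ := fun p => P - 1 - f (P - 1 - p) with hf'def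
  have hf' : IsNCMatching P f' := reverse_nc hf
  have hT' : ∀ p, m ≤ p → p < n + m → ¬ (m ≤ f' p ∧ f' p < n + m) := by
    intro p h1 h2
    have hrev : n + m ≤ P - 1 - p ∧ P - 1 - p < 2 * n + m := by omega
    have hb := hbot (P - 1 - p) hrev.1 hrev.2
    have hfb : f (P - 1 - p) < P := hf.1 _ (by omega)
    simp only [hf'def]
    omega
  have hB := lemB P m (n + m) (m + j) (2 * n + 2 * m - j) m f' hf' hT'
    (by omega) (by omega) (by omega) (by omega) (by omega) (by omega)
  unfold lineCross
  have e : ((Finset.range P).filter (fun p => vSide m n j p ∧ ¬ vSide m n j (f p))).card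
      = ((Finset.range P).filter
        (fun p => ¬ (m + j ≤ p ∧ p < 2 * n + 2 * m - j) ∧
          (m + j ≤ f' p ∧ f' p < 2 * n + 2 * m - j))).card := by
    apply Finset.card_bij (fun x _ => P - 1 - x)
    · intro x hx
      simp only [Finset.mem_filter, Finset.mem_range] at hx ⊢; simp only [vSide] at hx ⊢
      have hfx : f x < P := hf.1 x hx.1
      have hxe : P - 1 - (P - 1 - x) = x := by omega
      simp only [hf'def, hxe]
      omega
    · intro x hx y hy e
      simp only [Finset.mem_filter, Finset.mem_range] at hx hy
      omega
    · intro y hy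
      refine ⟨P - 1 - y, ?_, ?_⟩
      · simp only [Finset.mem_filter, Finset.mem_range] at hy ⊢; simp only [vSide] at hy ⊢
        have hye : P - 1 - (P - 1 - y) = y := by omega
        simp only [hf'def, hye] at hy
        have hfy : f y < P := hf.1 y (by omega)
        omega
      · simp only [Finset.mem_filter, Finset.mem_range] at hy
        omega
  rw [e]
  exact hB

/-- Vertical composition `C₁ ∗_v C₂`: gluing a matching `C₁` of the `m₁ × n`
rectangle with no returns on its bottom side atop a matching `C₂` of the
`m₂ × n` rectangle with no returns on its top side yields a noncrossing matching
`F` of the boundary of the `(m₁+m₂) × n` rectangle; every vertical separating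
line of `F` is crossed at most `d^v(C₁) + d^v(C₂) ≤ m₁ + m₂` times, while every
horizontal separating line lying within the `C₁` (resp. `C₂`) part is crossed
the same number of times as in `C₁` (resp. `C₂`).

The gluing is described by the hypotheses `hF₁`, `hF₂`: the non-bottom points of
`C₁` embed via `emb₁` and the non-top points of `C₂` embed via `p ↦ p + m₁`; an
arc of `C₁` ending at a bottom point `b` (the `k`-th from the left, where
`k = 2n + m₁ - 1 - b`) is continued by the arc of `C₂` starting at its `k`-th
top point, and vice versa. -/
theorem vertical_composition (m₁ m₂ n : ℕ) (hm₁ : 1 ≤ m₁) (hm₂ : 1 ≤ m₂) (hn : 1 ≤ n)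
    (f₁ f₂ F : ℕ → ℕ)
    (hC₁ : IsNCMatching (2 * (m₁ + n)) f₁)
    (hC₂ : IsNCMatching (2 * (m₂ + n)) f₂)
    (hbot : ∀ p, n + m₁ ≤ p → p < 2 * n + m₁ → ¬ (n + m₁ ≤ f₁ p ∧ f₁ p < 2 * n + m₁))
    (htop : ∀ p, p < n → ¬ f₂ p < n)
    (hF₁ : ∀ p, p < 2 * (m₁ + n) → (p < n + m₁ ∨ 2 * n + m₁ ≤ p) →
      F (emb₁ m₁ m₂ n p) =
        if n + m₁ ≤ f₁ p ∧ f₁ p < 2 * n + m₁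
        then f₂ (2 * n + m₁ - 1 - f₁ p) + m₁
        else emb₁ m₁ m₂ n (f₁ p))
    (hF₂ : ∀ p, p < 2 * (m₂ + n) → n ≤ p →
      F (p + m₁) =
        if f₂ p < n
        then emb₁ m₁ m₂ n (f₁ (2 * n + m₁ - 1 - f₂ p))
        else f₂ p + m₁) :
    IsNCMatching (2 * ((m₁ + m₂) + n)) F ∧
    (∀ j, 1 ≤ j → j ≤ n - 1 →
      lineCross (2 * ((m₁ + m₂) + n)) (vSide (m₁ + m₂) n j) F ≤ dv m₁ n f₁ + dv m₂ n f₂) ∧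
    dv m₁ n f₁ + dv m₂ n f₂ ≤ m₁ + m₂ ∧
    (∀ i, 1 ≤ i → i ≤ m₁ - 1 →
      lineCross (2 * ((m₁ + m₂) + n)) (hSide (m₁ + m₂) n i) F
        = lineCross (2 * (m₁ + n)) (hSide m₁ n i) f₁) ∧
    (∀ i, 1 ≤ i → i ≤ m₂ - 1 →
      lineCross (2 * ((m₁ + m₂) + n)) (hSide (m₁ + m₂) n (m₁ + i)) F
        = lineCross (2 * (m₂ + n)) (hSide m₂ n i) f₂) := by
  classical
  have hf₁P := hC₁.1
  have hf₁inv := hC₁.2.1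
  have hf₂P := hC₂.1
  have hf₂inv := hC₂.2.1
  have hnc₁ := hC₁.2.2.2
  have hnc₂ := hC₂.2.2.2
  have embcases : ∀ x : ℕ, (x < n + m₁ ∧ emb₁ m₁ m₂ n x = x) ∨
      (n + m₁ ≤ x ∧ emb₁ m₁ m₂ n x = x + 2 * m₂) := by
    intro x; unfold emb₁; split_ifs with h
    · exact Or.inl ⟨h, rfl⟩
    · exact Or.inr ⟨by omega, rfl⟩
  have embmono : ∀ x y : ℕ, emb₁ m₁ m₂ n x < emb₁ m₁ m₂ n y ↔ x < y := by
    intro x y; unfold emb₁; split_ifs <;> omega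
  have desc : ∀ q, q < 2 * ((m₁ + m₂) + n) →
      (∃ p, p < 2 * (m₁ + n) ∧ (p < n + m₁ ∨ 2 * n + m₁ ≤ p) ∧
        (f₁ p < n + m₁ ∨ 2 * n + m₁ ≤ f₁ p) ∧
        q = emb₁ m₁ m₂ n p ∧ F q = emb₁ m₁ m₂ n (f₁ p)) ∨
      (∃ p, p < 2 * (m₁ + n) ∧ (p < n + m₁ ∨ 2 * n + m₁ ≤ p) ∧
        (n + m₁ ≤ f₁ p ∧ f₁ p < 2 * n + m₁) ∧
        q = emb₁ m₁ m₂ n p ∧ F q = f₂ (2 * n + m₁ - 1 - f₁ p) + m₁) ∨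
      (∃ p, n ≤ p ∧ p < 2 * (m₂ + n) ∧ n ≤ f₂ p ∧ q = p + m₁ ∧ F q = f₂ p + m₁) ∨
      (∃ p, n ≤ p ∧ p < 2 * (m₂ + n) ∧ f₂ p < n ∧ q = p + m₁ ∧
        F q = emb₁ m₁ m₂ n (f₁ (2 * n + m₁ - 1 - f₂ p))) := by
    intro q hq
    by_cases hu : q < n + m₁ ∨ 2 * n + m₁ + 2 * m₂ ≤ q
    · have hex : ∃ p, p < 2 * (m₁ + n) ∧ (p < n + m₁ ∨ 2 * n + m₁ ≤ p) ∧
          emb₁ m₁ m₂ n p = q := by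
        rcases hu with hu | hu
        · exact ⟨q, by omega, by omega, by unfold emb₁; rw [if_pos hu]⟩
        · refine ⟨q - 2 * m₂, by omega, by omega, ?_⟩
          unfold emb₁; rw [if_neg (by omega)]; omega
      obtain ⟨p, hp1, hp2, hp3⟩ := hex
      have hFq := hF₁ p hp1 hp2
      rw [hp3] at hFq
      by_cases hb : n + m₁ ≤ f₁ p ∧ f₁ p < 2 * n + m₁
      · exact Or.inr (Or.inl ⟨p, hp1, hp2, hb, hp3.symm, by rw [hFq, if_pos hb]⟩)
      · have hfpP := hf₁P p hp1
        exact Or.inl ⟨p, hp1, hp2, by omega, hp3.symm, by rw [hFq, if_neg hb]⟩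
    · have hpb : n ≤ q - m₁ ∧ q - m₁ < 2 * (m₂ + n) ∧ (q - m₁) + m₁ = q := by omega
      have hFq := hF₂ (q - m₁) hpb.2.1 hpb.1
      rw [hpb.2.2] at hFq
      by_cases ht : f₂ (q - m₁) < n
      · exact Or.inr (Or.inr (Or.inr ⟨q - m₁, hpb.1, hpb.2.1, ht, hpb.2.2.symm,
          by rw [hFq, if_pos ht]⟩))
      · exact Or.inr (Or.inr (Or.inl ⟨q - m₁, hpb.1, hpb.2.1, by omega, hpb.2.2.symm,
          by rw [hFq, if_neg ht]⟩))
  refine ⟨⟨?_, ?_, ?_, ?_⟩, ?_, ?_, ?_, ?_⟩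
  · -- bounds
    intro x hx
    rcases desc x hx with ⟨p,h1,h2,h3,h4,h5⟩|⟨p,h1,h2,h3,h4,h5⟩|⟨p,h1,h2,h3,h4,h5⟩|⟨p,h1,h2,h3,h4,h5⟩
    · rw [h5]; have := hf₁P p h1
      rcases embcases (f₁ p) with ⟨a,b⟩|⟨a,b⟩ <;> omega
    · rw [h5]
      have hKP : 2 * n + m₁ - 1 - f₁ p < 2 * (m₂ + n) := by omega
      have := hf₂P _ hKP; omega
    · rw [h5]; have := hf₂P p h2; omega
    · rw [h5]
      have hBP : 2 * n + m₁ - 1 - f₂ p < 2 * (m₁ + n) := by omega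
      have := hf₁P _ hBP
      rcases embcases (f₁ (2 * n + m₁ - 1 - f₂ p)) with ⟨a,b⟩|⟨a,b⟩ <;> omega
  · -- involution
    intro x hx
    rcases desc x hx with ⟨p,h1,h2,h3,h4,h5⟩|⟨p,h1,h2,h3,h4,h5⟩|⟨p,h1,h2,h3,h4,h5⟩|⟨p,h1,h2,h3,h4,h5⟩
    · rw [h5]
      have hfpP := hf₁P p h1
      have e := hF₁ (f₁ p) hfpP h3
      rw [hf₁inv p h1] at e
      rw [e, if_neg (by omega : ¬ (n + m₁ ≤ p ∧ p < 2 * n + m₁)), h4]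
    · rw [h5]
      have hK : 2 * n + m₁ - 1 - f₁ p < n := by omega
      have hKP : 2 * n + m₁ - 1 - f₁ p < 2 * (m₂ + n) := by omega
      have hfK : n ≤ f₂ (2 * n + m₁ - 1 - f₁ p) := by have := htop _ hK; omega
      have e := hF₂ (f₂ (2 * n + m₁ - 1 - f₁ p)) (hf₂P _ hKP) hfK
      rw [hf₂inv _ hKP] at e
      rw [e, if_pos hK]
      have e2 : 2 * n + m₁ - 1 - (2 * n + m₁ - 1 - f₁ p) = f₁ p := by omega
      rw [e2, hf₁inv p h1, h4]
    · rw [h5]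
      have e := hF₂ (f₂ p) (hf₂P p h2) h3
      rw [hf₂inv p h2] at e
      rw [e, if_neg (by omega : ¬ p < n), h4]
    · rw [h5]
      have hB1 : n + m₁ ≤ 2 * n + m₁ - 1 - f₂ p := by omega
      have hB2 : 2 * n + m₁ - 1 - f₂ p < 2 * n + m₁ := by omega
      have hBP : 2 * n + m₁ - 1 - f₂ p < 2 * (m₁ + n) := by omega
      have hfB := hbot _ hB1 hB2
      have e := hF₁ (f₁ (2 * n + m₁ - 1 - f₂ p)) (hf₁P _ hBP) (by have := hf₁P _ hBP; omega)
      rw [hf₁inv _ hBP] at e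
      rw [e, if_pos ⟨hB1, hB2⟩]
      have e2 : 2 * n + m₁ - 1 - (2 * n + m₁ - 1 - f₂ p) = f₂ p := by omega
      rw [e2, hf₂inv p h2, h4]
  · -- no fixed point
    intro x hx
    rcases desc x hx with ⟨p,h1,h2,h3,h4,h5⟩|⟨p,h1,h2,h3,h4,h5⟩|⟨p,h1,h2,h3,h4,h5⟩|⟨p,h1,h2,h3,h4,h5⟩
    · rw [h5, h4]
      have := hC₁.2.2.1 p h1
      rcases embcases p with ⟨a,b⟩|⟨a,b⟩ <;> rcases embcases (f₁ p) with ⟨c,d⟩|⟨c,d⟩ <;> omega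
    · rw [h5, h4]
      have hK : 2 * n + m₁ - 1 - f₁ p < n := by omega
      have hKP : 2 * n + m₁ - 1 - f₁ p < 2 * (m₂ + n) := by omega
      have hfK := htop _ hK
      have := hf₂P _ hKP
      rcases embcases p with ⟨a,b⟩|⟨a,b⟩ <;> omega
    · rw [h5, h4]
      have := hC₂.2.2.1 p h2; omega
    · rw [h5, h4]
      have hBP : 2 * n + m₁ - 1 - f₂ p < 2 * (m₁ + n) := by omega
      have hfB := hbot (2 * n + m₁ - 1 - f₂ p) (by omega) (by omega)
      have := hf₁P _ hBP
      rcases embcases (f₁ (2 * n + m₁ - 1 - f₂ p)) with ⟨a,b⟩|⟨a,b⟩ <;> omega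
  · -- noncrossing
    intro q q' hq hq'
    rintro ⟨o1, o2, o3⟩
    rcases desc q hq with ⟨p,hp1,hp2,hp3,hp4,hp5⟩|⟨p,hp1,hp2,hp3,hp4,hp5⟩|⟨p,hp1,hp2,hp3,hp4,hp5⟩|⟨p,hp1,hp2,hp3,hp4,hp5⟩ <;>
      rcases desc q' hq' with ⟨r,hr1,hr2,hr3,hr4,hr5⟩|⟨r,hr1,hr2,hr3,hr4,hr5⟩|⟨r,hr1,hr2,hr3,hr4,hr5⟩|⟨r,hr1,hr2,hr3,hr4,hr5⟩ <;>
      rw [hp4, hr4] at o1 <;> rw [hr4, hp5] at o2 <;> rw [hp5, hr5] at o3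
    · -- U U
      exact hnc₁ p r hp1 hr1 ⟨(embmono _ _).mp o1, (embmono _ _).mp o2, (embmono _ _).mp o3⟩
    · -- U TU
      have e1 : p < r := (embmono _ _).mp o1
      have e2 : r < f₁ p := (embmono _ _).mp o2
      have nm := nc_mem hC₁ hp1 hr1 e1 e2
      have hKP' : 2 * n + m₁ - 1 - f₁ r < 2 * (m₂ + n) := by omega
      have := hf₂P _ hKP'
      rcases embcases p with ⟨a,b⟩|⟨a,b⟩ <;> rcases embcases (f₁ p) with ⟨c,d⟩|⟨c,d⟩ <;> omega
    · -- U L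
      have h2P := hf₂P r hr2
      rcases embcases p with ⟨a,b⟩|⟨a,b⟩ <;> rcases embcases (f₁ p) with ⟨c,d⟩|⟨c,d⟩ <;> omega
    · -- U TL
      have hB1 : n + m₁ ≤ 2 * n + m₁ - 1 - f₂ r := by omega
      have hB2 : 2 * n + m₁ - 1 - f₂ r < 2 * n + m₁ := by omega
      have hBP : 2 * n + m₁ - 1 - f₂ r < 2 * (m₁ + n) := by omega
      have hfB := hbot _ hB1 hB2
      have hfBP := hf₁P _ hBP
      have hreg : p < n + m₁ ∧ 2 * n + m₁ ≤ f₁ p := by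
        rcases embcases p with ⟨a,b⟩|⟨a,b⟩ <;> rcases embcases (f₁ p) with ⟨c,d⟩|⟨c,d⟩ <;> omega
      have e3 : f₁ p < f₁ (2 * n + m₁ - 1 - f₂ r) := (embmono _ _).mp o3
      have nm := nc_mem hC₁ hp1 hBP (by omega) (by omega)
      omega
    · -- TU U
      have hK : 2 * n + m₁ - 1 - f₁ p < n := by omega
      have hKP : 2 * n + m₁ - 1 - f₁ p < 2 * (m₂ + n) := by omega
      have hfK : n ≤ f₂ (2 * n + m₁ - 1 - f₁ p) := by have := htop _ hK; omega
      have hfKP := hf₂P _ hKP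
      have hreg : p < n + m₁ ∧ r < n + m₁ ∧ p < r := by
        rcases embcases p with ⟨a,b⟩|⟨a,b⟩ <;> rcases embcases r with ⟨c,d⟩|⟨c,d⟩ <;> omega
      have nm := nc_mem hC₁ hp1 hr1 hreg.2.2 (by omega)
      rcases embcases (f₁ r) with ⟨c,d⟩|⟨c,d⟩ <;> omega
    · -- TU TU
      have hK : 2 * n + m₁ - 1 - f₁ p < n := by omega
      have hKP : 2 * n + m₁ - 1 - f₁ p < 2 * (m₂ + n) := by omega
      have hfK : n ≤ f₂ (2 * n + m₁ - 1 - f₁ p) := by have := htop _ hK; omega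
      have hfKP := hf₂P _ hKP
      have hKP' : 2 * n + m₁ - 1 - f₁ r < 2 * (m₂ + n) := by omega
      have hfKP' := hf₂P _ hKP'
      have hreg : p < n + m₁ ∧ r < n + m₁ ∧ p < r := by
        rcases embcases p with ⟨a,b⟩|⟨a,b⟩ <;> rcases embcases r with ⟨c,d⟩|⟨c,d⟩ <;> omega
      have nm := nc_mem hC₁ hp1 hr1 hreg.2.2 (by omega)
      have nm2 := nc_mem hC₂ hKP hKP' (by omega) (by omega)
      omega
    · -- TU L
      have hK : 2 * n + m₁ - 1 - f₁ p < n := by omega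
      have hKP : 2 * n + m₁ - 1 - f₁ p < 2 * (m₂ + n) := by omega
      have hfK : n ≤ f₂ (2 * n + m₁ - 1 - f₁ p) := by have := htop _ hK; omega
      have hfKP := hf₂P _ hKP
      have nm := nc_mem hC₂ hKP hr2 (by omega) (by omega)
      omega
    · -- TU TL
      have hK : 2 * n + m₁ - 1 - f₁ p < n := by omega
      have hKP : 2 * n + m₁ - 1 - f₁ p < 2 * (m₂ + n) := by omega
      have hfK : n ≤ f₂ (2 * n + m₁ - 1 - f₁ p) := by have := htop _ hK; omega
      have hfKP := hf₂P _ hKP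
      have hB1 : n + m₁ ≤ 2 * n + m₁ - 1 - f₂ r := by omega
      have hB2 : 2 * n + m₁ - 1 - f₂ r < 2 * n + m₁ := by omega
      have hBP' : 2 * n + m₁ - 1 - f₂ r < 2 * (m₁ + n) := by omega
      have hfB' := hbot _ hB1 hB2
      have hfBP' := hf₁P _ hBP'
      have nm := nc_mem hC₂ hKP hr2 (by omega) (by omega)
      have hpreg : p < n + m₁ := by
        rcases embcases p with ⟨a,b⟩|⟨a,b⟩ <;> omega
      have nm2 := nc_mem hC₁ hp1 hBP' (by omega) (by omega)
      rcases embcases (f₁ (2 * n + m₁ - 1 - f₂ r)) with ⟨c,d⟩|⟨c,d⟩ <;> omega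
    · -- L U
      have := hf₂P p hp2
      rcases embcases r with ⟨a,b⟩|⟨a,b⟩ <;> omega
    · -- L TU
      have := hf₂P p hp2
      rcases embcases r with ⟨a,b⟩|⟨a,b⟩ <;> omega
    · -- L L
      exact hnc₂ p r hp2 hr2 ⟨by omega, by omega, by omega⟩
    · -- L TL
      have nm := nc_mem hC₂ hp2 hr2 (by omega) (by omega)
      omega
    · -- TL U
      have hB1 : n + m₁ ≤ 2 * n + m₁ - 1 - f₂ p := by omega
      have hB2 : 2 * n + m₁ - 1 - f₂ p < 2 * n + m₁ := by omega
      have hBP : 2 * n + m₁ - 1 - f₂ p < 2 * (m₁ + n) := by omega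
      have hfB := hbot _ hB1 hB2
      have hfBP := hf₁P _ hBP
      have hreg : 2 * n + m₁ ≤ f₁ (2 * n + m₁ - 1 - f₂ p) ∧ 2 * n + m₁ ≤ r ∧
          r < f₁ (2 * n + m₁ - 1 - f₂ p) := by
        rcases embcases (f₁ (2 * n + m₁ - 1 - f₂ p)) with ⟨a,b⟩|⟨a,b⟩ <;>
          rcases embcases r with ⟨c,d⟩|⟨c,d⟩ <;> omega
      have nm := nc_mem hC₁ hBP hr1 (by omega) (by omega)
      rcases embcases (f₁ r) with ⟨c,d⟩|⟨c,d⟩ <;>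
        rcases embcases (f₁ (2 * n + m₁ - 1 - f₂ p)) with ⟨e,f⟩|⟨e,f⟩ <;> omega
    · -- TL TU
      have hB1 : n + m₁ ≤ 2 * n + m₁ - 1 - f₂ p := by omega
      have hB2 : 2 * n + m₁ - 1 - f₂ p < 2 * n + m₁ := by omega
      have hBP : 2 * n + m₁ - 1 - f₂ p < 2 * (m₁ + n) := by omega
      have hfB := hbot _ hB1 hB2
      have hfBP := hf₁P _ hBP
      have hKP' : 2 * n + m₁ - 1 - f₁ r < 2 * (m₂ + n) := by omega
      have hfKP' := hf₂P _ hKP'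
      rcases embcases (f₁ (2 * n + m₁ - 1 - f₂ p)) with ⟨a,b⟩|⟨a,b⟩ <;>
        rcases embcases r with ⟨c,d⟩|⟨c,d⟩ <;> omega
    · -- TL L
      have hB1 : n + m₁ ≤ 2 * n + m₁ - 1 - f₂ p := by omega
      have hB2 : 2 * n + m₁ - 1 - f₂ p < 2 * n + m₁ := by omega
      have hBP : 2 * n + m₁ - 1 - f₂ p < 2 * (m₁ + n) := by omega
      have hfB := hbot _ hB1 hB2
      have hfBP := hf₁P _ hBP
      have := hf₂P r hr2
      rcases embcases (f₁ (2 * n + m₁ - 1 - f₂ p)) with ⟨a,b⟩|⟨a,b⟩ <;> omega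
    · -- TL TL
      have hB1 : n + m₁ ≤ 2 * n + m₁ - 1 - f₂ p := by omega
      have hB2 : 2 * n + m₁ - 1 - f₂ p < 2 * n + m₁ := by omega
      have hBP : 2 * n + m₁ - 1 - f₂ p < 2 * (m₁ + n) := by omega
      have hfB := hbot _ hB1 hB2
      have hfBP := hf₁P _ hBP
      have hB1' : n + m₁ ≤ 2 * n + m₁ - 1 - f₂ r := by omega
      have hB2' : 2 * n + m₁ - 1 - f₂ r < 2 * n + m₁ := by omega
      have hBP' : 2 * n + m₁ - 1 - f₂ r < 2 * (m₁ + n) := by omega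
      have hfB' := hbot _ hB1' hB2'
      have hfBP' := hf₁P _ hBP'
      have hts : f₂ (f₂ p) = p := hf₂inv p hp2
      have hts' : f₂ (f₂ r) = r := hf₂inv r hr2
      have htP : f₂ p < 2 * (m₂ + n) := hf₂P p hp2
      have htP' : f₂ r < 2 * (m₂ + n) := hf₂P r hr2
      have c := hnc₂ (f₂ p) (f₂ r) htP htP'
      rw [hts, hts'] at c
      have hneq : f₂ p ≠ f₂ r := by
        intro e
        have e2 : p = r := by rw [← hts, e, hts']
        omega
      have htt : f₂ r < f₂ p := by omega
      have e3 : f₁ (2 * n + m₁ - 1 - f₂ p) < f₁ (2 * n + m₁ - 1 - f₂ r) :=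
        (embmono _ _).mp o3
      have hfBreg : 2 * n + m₁ ≤ f₁ (2 * n + m₁ - 1 - f₂ p) := by
        rcases embcases (f₁ (2 * n + m₁ - 1 - f₂ p)) with ⟨a,b⟩|⟨a,b⟩ <;> omega
      have nm := nc_mem hC₁ hBP hBP' (by omega) (by omega)
      omega
  · -- vertical lines
    intro j hj1 hj2
    have hc1 : lineCross (2 * (m₁ + n)) (vSide m₁ n j) f₁ ≤ dv m₁ n f₁ := by
      unfold dv
      exact Finset.le_sup (f := fun j => lineCross (2 * (m₁ + n)) (vSide m₁ n j) f₁)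
        (Finset.mem_Icc.mpr ⟨hj1, hj2⟩)
    have hc2 : lineCross (2 * (m₂ + n)) (vSide m₂ n j) f₂ ≤ dv m₂ n f₂ := by
      unfold dv
      exact Finset.le_sup (f := fun j => lineCross (2 * (m₂ + n)) (vSide m₂ n j) f₂)
        (Finset.mem_Icc.mpr ⟨hj1, hj2⟩)
    have hmain : lineCross (2 * ((m₁ + m₂) + n)) (vSide (m₁ + m₂) n j) F ≤
        lineCross (2 * (m₁ + n)) (vSide m₁ n j) f₁ +
        lineCross (2 * (m₂ + n)) (vSide m₂ n j) f₂ := by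
      unfold lineCross
      set T₁ := (Finset.range (2 * (m₁ + n))).filter
        (fun p => vSide m₁ n j p ∧ ¬ vSide m₁ n j (f₁ p)) with hT₁
      set T₂ := (Finset.range (2 * (m₂ + n))).filter
        (fun p => vSide m₂ n j p ∧ ¬ vSide m₂ n j (f₂ p)) with hT₂
      set W := T₁ ∪ T₂.image (fun t => t + 2 * (m₁ + n)) with hW
      have hT₁lt : ∀ v ∈ T₁, v < 2 * (m₁ + n) := by
        intro v hv; rw [hT₁, Finset.mem_filter, Finset.mem_range] at hv; exact hv.1
      have hWcard : W.card = T₁.card + T₂.card := by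
        rw [hW, Finset.card_union_of_disjoint, Finset.card_image_of_injective _
          (add_left_injective (2 * (m₁ + n)))]
        rw [Finset.disjoint_left]
        intro v hv hv'
        have := hT₁lt v hv
        simp only [Finset.mem_image] at hv'
        omega
      set Φ : ℕ → ℕ := fun x =>
        if x < n + m₁ ∨ 2 * n + m₁ + 2 * m₂ ≤ x then
          (if n + m₁ ≤ f₁ (if x < n + m₁ then x else x - 2 * m₂) ∧
              f₁ (if x < n + m₁ then x else x - 2 * m₂) < 2 * n + m₁ then
            (if vSide m₁ n j (f₁ (if x < n + m₁ then x else x - 2 * m₂)) then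
              2 * n + m₁ - 1 - f₁ (if x < n + m₁ then x else x - 2 * m₂) + 2 * (m₁ + n)
            else (if x < n + m₁ then x else x - 2 * m₂))
          else (if x < n + m₁ then x else x - 2 * m₂))
        else
          (if f₂ (x - m₁) < n ∧ vSide m₂ n j (f₂ (x - m₁)) then
            2 * n + m₁ - 1 - f₂ (x - m₁)
          else x - m₁ + 2 * (m₁ + n)) with hΦ
      set Ψ : ℕ → ℕ := fun v =>
        if v < 2 * (m₁ + n) then
          (if n + m₁ ≤ v ∧ v < 2 * n + m₁ then f₂ (2 * n + m₁ - 1 - v) + m₁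
           else emb₁ m₁ m₂ n v)
        else
          (if v - 2 * (m₁ + n) < n then emb₁ m₁ m₂ n (f₁ (2 * n + m₁ - 1 - (v - 2 * (m₁ + n))))
           else v - 2 * (m₁ + n) + m₁) with hΨ
      have key : ∀ x, x ∈ (Finset.range (2 * ((m₁ + m₂) + n))).filter
          (fun p => vSide (m₁ + m₂) n j p ∧ ¬ vSide (m₁ + m₂) n j (F p)) →
          Φ x ∈ W ∧ Ψ (Φ x) = x := by
        intro x hx
        rw [Finset.mem_filter, Finset.mem_range] at hx
        obtain ⟨hxP, hS, hnS⟩ := hx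
        simp only [vSide] at hS
        simp only [vSide] at hnS
        rcases desc x hxP with ⟨p,h1,h2,h3,h4,h5⟩|⟨p,h1,h2,h3,h4,h5⟩|⟨p,h1,h2,h3,h4,h5⟩|⟨p,h1,h2,h3,h4,h5⟩
        · -- U case
          have hfpP := hf₁P p h1
          have hpx : (if x < n + m₁ then x else x - 2 * m₂) = p := by
            rw [h4]; unfold emb₁; split_ifs <;> omega
          have hup : x < n + m₁ ∨ 2 * n + m₁ + 2 * m₂ ≤ x := by
            rcases embcases p with ⟨a,b⟩|⟨a,b⟩ <;> omega
          have hΦx : Φ x = p := by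
            simp only [hΦ]
            rw [if_pos hup, hpx, if_neg (by omega : ¬ (n + m₁ ≤ f₁ p ∧ f₁ p < 2 * n + m₁))]
          rw [h5] at hnS
          constructor
          · rw [hΦx]
            apply Finset.mem_union_left
            rw [hT₁, Finset.mem_filter, Finset.mem_range]
            refine ⟨h1, ?_, ?_⟩ <;> rw [vSide] <;>
              [skip; rw [not_or]] <;>
              rcases embcases p with ⟨a,b⟩|⟨a,b⟩ <;>
              rcases embcases (f₁ p) with ⟨c,d⟩|⟨c,d⟩ <;> omega
          · rw [hΦx]
            simp only [hΨ]
            rw [if_pos h1, if_neg (by omega : ¬ (n + m₁ ≤ p ∧ p < 2 * n + m₁)), ← h4]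
        · -- TU case
          have hfpP := hf₁P p h1
          have hK : 2 * n + m₁ - 1 - f₁ p < n := by omega
          have hKP : 2 * n + m₁ - 1 - f₁ p < 2 * (m₂ + n) := by omega
          have hfK : n ≤ f₂ (2 * n + m₁ - 1 - f₁ p) := by have := htop _ hK; omega
          have hfKP := hf₂P _ hKP
          have hpx : (if x < n + m₁ then x else x - 2 * m₂) = p := by
            rw [h4]; unfold emb₁; split_ifs <;> omega
          have hup : x < n + m₁ ∨ 2 * n + m₁ + 2 * m₂ ≤ x := by
            rcases embcases p with ⟨a,b⟩|⟨a,b⟩ <;> omega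
          rw [h5] at hnS
          by_cases hSb : vSide m₁ n j (f₁ p)
          · have hΦx : Φ x = 2 * n + m₁ - 1 - f₁ p + 2 * (m₁ + n) := by
              simp only [hΦ]
              rw [if_pos hup, hpx, if_pos h3, if_pos hSb]
            simp only [vSide] at hSb
            constructor
            · rw [hΦx]
              apply Finset.mem_union_right
              rw [Finset.mem_image]
              refine ⟨2 * n + m₁ - 1 - f₁ p, ?_, rfl⟩
              rw [hT₂, Finset.mem_filter, Finset.mem_range]
              refine ⟨by omega, ?_, ?_⟩ <;> simp only [vSide] <;> omega
            · rw [hΦx]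
              simp only [hΨ]
              rw [if_neg (by omega)]
              have e1 : 2 * n + m₁ - 1 - f₁ p + 2 * (m₁ + n) - 2 * (m₁ + n) =
                2 * n + m₁ - 1 - f₁ p := by omega
              rw [e1, if_pos hK]
              have e2 : 2 * n + m₁ - 1 - (2 * n + m₁ - 1 - f₁ p) = f₁ p := by omega
              rw [e2, hf₁inv p h1, ← h4]
          · have hΦx : Φ x = p := by
              simp only [hΦ]
              rw [if_pos hup, hpx, if_pos h3, if_neg hSb]
            simp only [vSide] at hSb
            constructor
            · rw [hΦx]
              apply Finset.mem_union_left
              rw [hT₁, Finset.mem_filter, Finset.mem_range]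
              refine ⟨h1, ?_, ?_⟩ <;> simp only [vSide] <;>
                rcases embcases p with ⟨a,b⟩|⟨a,b⟩ <;> omega
            · rw [hΦx]
              simp only [hΨ]
              rw [if_pos h1, if_neg (by omega : ¬ (n + m₁ ≤ p ∧ p < 2 * n + m₁)), ← h4]
        · -- L case
          have hfpP := hf₂P p h2
          have hlow : ¬ (x < n + m₁ ∨ 2 * n + m₁ + 2 * m₂ ≤ x) := by omega
          have hxm : x - m₁ = p := by omega
          have hΦx : Φ x = p + 2 * (m₁ + n) := by
            simp only [hΦ]
            rw [if_neg hlow, hxm, if_neg (by omega : ¬ (f₂ p < n ∧ vSide m₂ n j (f₂ p)))]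
          rw [h5] at hnS
          constructor
          · rw [hΦx]
            apply Finset.mem_union_right
            rw [Finset.mem_image]
            refine ⟨p, ?_, rfl⟩
            rw [hT₂, Finset.mem_filter, Finset.mem_range]
            refine ⟨h2, ?_, ?_⟩ <;> simp only [vSide] <;> omega
          · rw [hΦx]
            simp only [hΨ]
            rw [if_neg (by omega)]
            have e1 : p + 2 * (m₁ + n) - 2 * (m₁ + n) = p := by omega
            rw [e1, if_neg (by omega : ¬ p < n)]
            omega
        · -- TL case
          have hfpP := hf₂P p h2
          have hB1 : n + m₁ ≤ 2 * n + m₁ - 1 - f₂ p := by omega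
          have hB2 : 2 * n + m₁ - 1 - f₂ p < 2 * n + m₁ := by omega
          have hBP : 2 * n + m₁ - 1 - f₂ p < 2 * (m₁ + n) := by omega
          have hfB := hbot _ hB1 hB2
          have hfBP := hf₁P _ hBP
          have hlow : ¬ (x < n + m₁ ∨ 2 * n + m₁ + 2 * m₂ ≤ x) := by omega
          have hxm : x - m₁ = p := by omega
          rw [h5] at hnS
          by_cases hSt : vSide m₂ n j (f₂ p)
          · have hΦx : Φ x = 2 * n + m₁ - 1 - f₂ p := by
              simp only [hΦ]
              rw [if_neg hlow, hxm, if_pos ⟨h3, hSt⟩]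
            simp only [vSide] at hSt
            constructor
            · rw [hΦx]
              apply Finset.mem_union_left
              rw [hT₁, Finset.mem_filter, Finset.mem_range]
              refine ⟨hBP, ?_, ?_⟩ <;> simp only [vSide] <;>
                rcases embcases (f₁ (2 * n + m₁ - 1 - f₂ p)) with ⟨a,b⟩|⟨a,b⟩ <;> omega
            · rw [hΦx]
              simp only [hΨ]
              rw [if_pos hBP, if_pos ⟨hB1, hB2⟩]
              have e2 : 2 * n + m₁ - 1 - (2 * n + m₁ - 1 - f₂ p) = f₂ p := by omega
              rw [e2, hf₂inv p h2]
              omega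
          · have hΦx : Φ x = p + 2 * (m₁ + n) := by
              simp only [hΦ]
              rw [if_neg hlow, hxm, if_neg (fun hc => hSt hc.2)]
            simp only [vSide] at hSt
            constructor
            · rw [hΦx]
              apply Finset.mem_union_right
              rw [Finset.mem_image]
              refine ⟨p, ?_, rfl⟩
              rw [hT₂, Finset.mem_filter, Finset.mem_range]
              refine ⟨h2, ?_, ?_⟩ <;> simp only [vSide] <;> omega
            · rw [hΦx]
              simp only [hΨ]
              rw [if_neg (by omega)]
              have e1 : p + 2 * (m₁ + n) - 2 * (m₁ + n) = p := by omega
              rw [e1, if_neg (by omega : ¬ p < n)]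
              omega
      calc ((Finset.range (2 * ((m₁ + m₂) + n))).filter
          (fun p => vSide (m₁ + m₂) n j p ∧ ¬ vSide (m₁ + m₂) n j (F p))).card
          ≤ W.card := by
            apply Finset.card_le_card_of_injOn Φ
            · intro x hx; exact (key x hx).1
            · intro x hx y hy e
              have ex := (key x hx).2
              have ey := (key y hy).2
              rw [← ex, ← ey, e]
        _ = T₁.card + T₂.card := hWcard
    omega
  · -- dv bound
    have d1 : dv m₁ n f₁ ≤ m₁ := by
      unfold dv
      apply Finset.sup_le
      intro j hj
      simp only [Finset.mem_Icc] at hj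
      exact cross_bot_le m₁ n j f₁ hC₁ hbot hj.1 (by omega)
    have d2 : dv m₂ n f₂ ≤ m₂ := by
      unfold dv
      apply Finset.sup_le
      intro j hj
      simp only [Finset.mem_Icc] at hj
      exact cross_top_le m₂ n j f₂ hC₂ htop hj.1 (by omega)
    omega
  · -- part 4
    intro i hi1 hi2
    unfold lineCross
    apply Finset.card_nbij' (fun x => if x < n + m₁ then x else x - 2 * m₂) (emb₁ m₁ m₂ n)
    · -- maps into filter₁
      intro x hx
      simp only [Finset.mem_coe, Finset.mem_filter, Finset.mem_range] at hx ⊢; simp only [hSide] at hx ⊢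
      obtain ⟨hxP, hS, hnS⟩ := hx
      have hpb : (if x < n + m₁ then x else x - 2 * m₂) < 2 * (m₁ + n) ∧
          ((if x < n + m₁ then x else x - 2 * m₂) < n + m₁ ∨
            2 * n + m₁ ≤ (if x < n + m₁ then x else x - 2 * m₂)) ∧
          emb₁ m₁ m₂ n (if x < n + m₁ then x else x - 2 * m₂) = x := by
        unfold emb₁; split_ifs <;> omega
      have hFx := hF₁ _ hpb.1 hpb.2.1
      rw [hpb.2.2] at hFx
      refine ⟨hpb.1, by split_ifs <;> omega, ?_⟩
      by_cases hb : n + m₁ ≤ f₁ (if x < n + m₁ then x else x - 2 * m₂) ∧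
          f₁ (if x < n + m₁ then x else x - 2 * m₂) < 2 * n + m₁
      · omega
      · rw [hFx, if_neg hb] at hnS
        have := hf₁P _ hpb.1
        rcases embcases (f₁ (if x < n + m₁ then x else x - 2 * m₂)) with ⟨a,b⟩|⟨a,b⟩ <;> omega
    · -- emb₁ maps filter₁ into filterF
      intro p hp
      simp only [Finset.mem_coe, Finset.mem_filter, Finset.mem_range] at hp ⊢; simp only [hSide] at hp ⊢
      obtain ⟨hpP, hS1, hnS1⟩ := hp
      have hNB : p < n + m₁ ∨ 2 * n + m₁ ≤ p := by omega
      have hFx := hF₁ p hpP hNB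
      refine ⟨?_, ?_, ?_⟩
      · rcases embcases p with ⟨a,b⟩|⟨a,b⟩ <;> omega
      · rcases embcases p with ⟨a,b⟩|⟨a,b⟩ <;> omega
      · rw [hFx]
        by_cases hb : n + m₁ ≤ f₁ p ∧ f₁ p < 2 * n + m₁
        · rw [if_pos hb]
          have hKP : 2 * n + m₁ - 1 - f₁ p < 2 * (m₂ + n) := by omega
          have := hf₂P _ hKP
          have hfK : n ≤ f₂ (2 * n + m₁ - 1 - f₁ p) := by
            have := htop (2 * n + m₁ - 1 - f₁ p) (by omega); omega
          omega
        · rw [if_neg hb]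
          have := hf₁P p hpP
          rcases embcases (f₁ p) with ⟨a,b⟩|⟨a,b⟩ <;> omega
    · intro x hx
      simp only [Finset.mem_coe, Finset.mem_filter, Finset.mem_range] at hx; simp only [hSide] at hx
      beta_reduce; unfold emb₁; split_ifs <;> omega
    · intro p hp
      simp only [Finset.mem_coe, Finset.mem_filter, Finset.mem_range] at hp; simp only [hSide] at hp
      beta_reduce; unfold emb₁; split_ifs <;> omega
  · -- part 5
    intro i hi1 hi2
    unfold lineCross
    apply Finset.card_nbij'
      (fun x => if n + m₁ ≤ x ∧ x < 2 * n + m₁ + 2 * m₂ then x - m₁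
        else 2 * n + m₁ - 1 - f₁ (if x < n + m₁ then x else x - 2 * m₂))
      (fun p => if p < n then emb₁ m₁ m₂ n (f₁ (2 * n + m₁ - 1 - p)) else p + m₁)
    · -- maps into filter₂
      intro x hx
      simp only [Finset.mem_coe, Finset.mem_filter, Finset.mem_range] at hx ⊢; simp only [hSide] at hx ⊢
      obtain ⟨hxP, hS, hnS⟩ := hx
      by_cases hlow : n + m₁ ≤ x ∧ x < 2 * n + m₁ + 2 * m₂
      · rw [if_pos hlow]
        have hge : n ≤ x - m₁ := by omega
        have hlt : x - m₁ < 2 * (m₂ + n) := by omega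
        have hFx := hF₂ (x - m₁) hlt hge
        have hxe : x - m₁ + m₁ = x := by omega
        rw [hxe] at hFx
        refine ⟨hlt, by omega, ?_⟩
        by_cases ht : f₂ (x - m₁) < n
        · exfalso
          rw [hFx, if_pos ht] at hnS
          have hB1 : n + m₁ ≤ 2 * n + m₁ - 1 - f₂ (x - m₁) := by omega
          have hB2 : 2 * n + m₁ - 1 - f₂ (x - m₁) < 2 * n + m₁ := by omega
          have hfB := hbot _ hB1 hB2
          have hfBP := hf₁P _ (by omega : 2 * n + m₁ - 1 - f₂ (x - m₁) < 2 * (m₁ + n))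
          rcases embcases (f₁ (2 * n + m₁ - 1 - f₂ (x - m₁))) with ⟨a,b⟩|⟨a,b⟩ <;> omega
        · rw [hFx, if_neg ht] at hnS
          have := hf₂P (x - m₁) hlt
          omega
      · rw [if_neg hlow]
        have hpb : (if x < n + m₁ then x else x - 2 * m₂) < 2 * (m₁ + n) ∧
            ((if x < n + m₁ then x else x - 2 * m₂) < n + m₁ ∨
              2 * n + m₁ ≤ (if x < n + m₁ then x else x - 2 * m₂)) ∧
            emb₁ m₁ m₂ n (if x < n + m₁ then x else x - 2 * m₂) = x := by
          unfold emb₁; split_ifs <;> omega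
        have hFx := hF₁ _ hpb.1 hpb.2.1
        rw [hpb.2.2] at hFx
        by_cases hb : n + m₁ ≤ f₁ (if x < n + m₁ then x else x - 2 * m₂) ∧
            f₁ (if x < n + m₁ then x else x - 2 * m₂) < 2 * n + m₁
        · rw [hFx, if_pos hb] at hnS
          have hKn : 2 * n + m₁ - 1 - f₁ (if x < n + m₁ then x else x - 2 * m₂) < n := by omega
          have hKP : 2 * n + m₁ - 1 - f₁ (if x < n + m₁ then x else x - 2 * m₂) <
              2 * (m₂ + n) := by omega
          have hfK := htop _ hKn
          have := hf₂P _ hKP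
          refine ⟨by omega, by omega, by omega⟩
        · exfalso
          rw [hFx, if_neg hb] at hnS
          have := hf₁P _ hpb.1
          rcases embcases (f₁ (if x < n + m₁ then x else x - 2 * m₂)) with ⟨a,b⟩|⟨a,b⟩ <;> omega
    · -- maps filter₂ into filterF
      intro p hp
      simp only [Finset.mem_coe, Finset.mem_filter, Finset.mem_range] at hp ⊢; simp only [hSide] at hp ⊢
      obtain ⟨hpP, hS2, hnS2⟩ := hp
      by_cases ht : p < n
      · rw [if_pos ht]
        have hB1 : n + m₁ ≤ 2 * n + m₁ - 1 - p := by omega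
        have hB2 : 2 * n + m₁ - 1 - p < 2 * n + m₁ := by omega
        have hBP : 2 * n + m₁ - 1 - p < 2 * (m₁ + n) := by omega
        have hfB := hbot _ hB1 hB2
        have hfBP := hf₁P _ hBP
        have hFx := hF₁ (f₁ (2 * n + m₁ - 1 - p)) hfBP (by omega)
        rw [hf₁inv _ hBP] at hFx
        rw [hFx, if_pos ⟨hB1, hB2⟩]
        have e2 : 2 * n + m₁ - 1 - (2 * n + m₁ - 1 - p) = p := by omega
        rw [e2]
        have := hf₂P p hpP
        rcases embcases (f₁ (2 * n + m₁ - 1 - p)) with ⟨a,b⟩|⟨a,b⟩ <;>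
          refine ⟨by omega, by omega, by omega⟩
      · rw [if_neg ht]
        have hFx := hF₂ p hpP (by omega)
        have hnt : ¬ f₂ p < n := by omega
        rw [hFx, if_neg hnt]
        have := hf₂P p hpP
        refine ⟨by omega, by omega, by omega⟩
    · -- left inverse
      intro x hx
      simp only [Finset.mem_coe, Finset.mem_filter, Finset.mem_range] at hx; simp only [hSide] at hx
      obtain ⟨hxP, hS, hnS⟩ := hx
      beta_reduce
      by_cases hlow : n + m₁ ≤ x ∧ x < 2 * n + m₁ + 2 * m₂
      · rw [if_pos hlow, if_neg (by omega : ¬ x - m₁ < n)]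
        omega
      · rw [if_neg hlow]
        have hpb : (if x < n + m₁ then x else x - 2 * m₂) < 2 * (m₁ + n) ∧
            ((if x < n + m₁ then x else x - 2 * m₂) < n + m₁ ∨
              2 * n + m₁ ≤ (if x < n + m₁ then x else x - 2 * m₂)) ∧
            emb₁ m₁ m₂ n (if x < n + m₁ then x else x - 2 * m₂) = x := by
          unfold emb₁; split_ifs <;> omega
        have hFx := hF₁ _ hpb.1 hpb.2.1
        rw [hpb.2.2] at hFx
        by_cases hb : n + m₁ ≤ f₁ (if x < n + m₁ then x else x - 2 * m₂) ∧
            f₁ (if x < n + m₁ then x else x - 2 * m₂) < 2 * n + m₁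
        · have hKn : 2 * n + m₁ - 1 - f₁ (if x < n + m₁ then x else x - 2 * m₂) < n := by
            omega
          rw [if_pos hKn]
          have e2 : 2 * n + m₁ - 1 -
              (2 * n + m₁ - 1 - f₁ (if x < n + m₁ then x else x - 2 * m₂)) =
              f₁ (if x < n + m₁ then x else x - 2 * m₂) := by omega
          rw [e2, hf₁inv _ hpb.1, hpb.2.2]
        · exfalso
          rw [hFx, if_neg hb] at hnS
          have := hf₁P _ hpb.1
          rcases embcases (f₁ (if x < n + m₁ then x else x - 2 * m₂)) with ⟨a,b⟩|⟨a,b⟩ <;> omega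
    · -- right inverse
      intro p hp
      simp only [Finset.mem_coe, Finset.mem_filter, Finset.mem_range] at hp; simp only [hSide] at hp
      obtain ⟨hpP, hS2, hnS2⟩ := hp
      beta_reduce
      by_cases ht : p < n
      · rw [if_pos ht]
        have hB1 : n + m₁ ≤ 2 * n + m₁ - 1 - p := by omega
        have hB2 : 2 * n + m₁ - 1 - p < 2 * n + m₁ := by omega
        have hBP : 2 * n + m₁ - 1 - p < 2 * (m₁ + n) := by omega
        have hfB := hbot _ hB1 hB2
        have hfBP := hf₁P _ hBP
        rcases embcases (f₁ (2 * n + m₁ - 1 - p)) with ⟨a,b⟩|⟨a,b⟩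
        · rw [b, if_neg (by omega),
            if_pos (by omega : f₁ (2 * n + m₁ - 1 - p) < n + m₁), hf₁inv _ hBP]
          omega
        · rw [b, if_neg (by omega),
            if_neg (by omega : ¬ f₁ (2 * n + m₁ - 1 - p) + 2 * m₂ < n + m₁)]
          have e : f₁ (2 * n + m₁ - 1 - p) + 2 * m₂ - 2 * m₂ = f₁ (2 * n + m₁ - 1 - p) := by
            omega
          rw [e, hf₁inv _ hBP]
          omega
      · rw [if_neg ht, if_pos (by omega : n + m₁ ≤ p + m₁ ∧ p + m₁ < 2 * n + m₁ + 2 * m₂)]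
        omega
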